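/- arXiv:2110.05735 — 5 statements merged into one kernel-verified Lean document; each statement's English description precedes it below -/
import Mathlib

section
/- Let θ0 < θ1 be positive reals, p0, p1 > 0 with p0 + p1 = 1, and τ ∈ ℤ₊. Then the function π(k) = ∑_{m=0}^{τ} [(λθ0)^{m+k} e^{-2λθ0} p0 + (λθ1)^{m+k} e^{-2λθ1} p1] / (m! · [(λθ0)^k e^{-λθ0} p0 + (λθ1)^k e^{-λθ1} p1]) is strictly decreasing in k ∈ ℤ₊. -/
open Real Finset

private lemma poisson_cdf_strictAnti (τ : ℕ) :
    StrictAntiOn (fun x : ℝ => Real.exp (-x) * ∑ m ∈ Finset.range (τ + 1), x ^ m / m.factorial)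
      (Set.Ici 0) := by
  apply strictAntiOn_of_deriv_neg (convex_Ici 0)
  · exact ((Real.continuous_exp.comp continuous_neg).mul
      (continuous_finset_sum _ fun m _ => (continuous_pow m).div_const _)).continuousOn
  · intro x hx
    rw [interior_Ici] at hx
    have h1 : HasDerivAt (fun x : ℝ => Real.exp (-x)) (-Real.exp (-x)) x := by
      simpa using (hasDerivAt_neg x).exp
    have h2 : HasDerivAt (fun x : ℝ => ∑ m ∈ Finset.range (τ + 1), x ^ m / m.factorial)
        (∑ m ∈ Finset.range τ, x ^ m / m.factorial) x := by
      have h3 : HasDerivAt (fun x : ℝ => ∑ m ∈ Finset.range (τ + 1), x ^ m / m.factorial)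
          (∑ m ∈ Finset.range (τ + 1), (m : ℝ) * x ^ (m - 1) / m.factorial) x := by
        apply HasDerivAt.fun_sum
        intro m _
        simpa using (hasDerivAt_pow m x).div_const (m.factorial : ℝ)
      convert h3 using 1
      rw [Finset.sum_range_succ']
      simp only [Nat.cast_zero, zero_mul, Nat.factorial_zero, Nat.cast_one, zero_div, add_zero]
      apply Finset.sum_congr rfl
      intro i _
      have hfac : ((i + 1).factorial : ℝ) = (i + 1) * i.factorial := by
        rw [Nat.factorial_succ]; push_cast; ring
      have hif : (i.factorial : ℝ) ≠ 0 := Nat.cast_ne_zero.2 i.factorial_ne_zero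
      rw [hfac]
      have hs : (i : ℕ) + 1 - 1 = i := by omega
      rw [hs]
      push_cast
      field_simp
    have hder := h1.fun_mul h2
    have heq : -Real.exp (-x) * (∑ m ∈ Finset.range (τ + 1), x ^ m / m.factorial)
        + Real.exp (-x) * ∑ m ∈ Finset.range τ, x ^ m / m.factorial
        = -(Real.exp (-x) * (x ^ τ / τ.factorial)) := by
      rw [Finset.sum_range_succ]
      ring
    rw [heq] at hder
    rw [hder.deriv]
    have : 0 < Real.exp (-x) * (x ^ τ / τ.factorial) :=
      mul_pos (Real.exp_pos _) (div_pos (pow_pos hx _) (by positivity))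
    linarith

theorem posterior_belief_strict_anti (l θ0 θ1 p0 p1 : ℝ) (hl : 0 < l)
    (h0 : 0 < θ0) (h01 : θ0 < θ1) (hp0 : 0 < p0) (hp1 : 0 < p1) (hp : p0 + p1 = 1)
    (τ : ℕ) :
    StrictAnti (fun k : ℕ =>
      ∑ m ∈ Finset.range (τ + 1),
        ((l * θ0) ^ (m + k) * Real.exp (-(2 * l * θ0)) * p0 +
         (l * θ1) ^ (m + k) * Real.exp (-(2 * l * θ1)) * p1) /
        ((Nat.factorial m) *
          ((l * θ0) ^ k * Real.exp (-(l * θ0)) * p0 +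
           (l * θ1) ^ k * Real.exp (-(l * θ1)) * p1))) := by
  set a := l * θ0 with ha_def
  set b := l * θ1 with hb_def
  have ha : 0 < a := mul_pos hl h0
  have hab : a < b := mul_lt_mul_of_pos_left h01 hl
  have hb : 0 < b := ha.trans hab
  set A := Real.exp (-a) * ∑ m ∈ Finset.range (τ + 1), a ^ m / m.factorial with hA_def
  set B := Real.exp (-b) * ∑ m ∈ Finset.range (τ + 1), b ^ m / m.factorial with hB_def
  have hAB : B < A := poisson_cdf_strictAnti τ ha.le hb.le hab
  have hu : ∀ k : ℕ, 0 < a ^ k * Real.exp (-a) * p0 := fun k => by positivity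
  have hv : ∀ k : ℕ, 0 < b ^ k * Real.exp (-b) * p1 := fun k => by positivity
  have hea : Real.exp (-(2 * a)) = Real.exp (-a) * Real.exp (-a) := by
    rw [← Real.exp_add]; ring_nf
  have heb : Real.exp (-(2 * b)) = Real.exp (-b) * Real.exp (-b) := by
    rw [← Real.exp_add]; ring_nf
  have key : ∀ k : ℕ,
      (∑ m ∈ Finset.range (τ + 1),
        (a ^ (m + k) * Real.exp (-(2 * l * θ0)) * p0 +
         b ^ (m + k) * Real.exp (-(2 * l * θ1)) * p1) /
        ((Nat.factorial m) *
          (a ^ k * Real.exp (-a) * p0 + b ^ k * Real.exp (-b) * p1)))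
      = (A * (a ^ k * Real.exp (-a) * p0) + B * (b ^ k * Real.exp (-b) * p1)) /
          (a ^ k * Real.exp (-a) * p0 + b ^ k * Real.exp (-b) * p1) := by
    intro k
    have h2a : (2 : ℝ) * l * θ0 = 2 * a := by rw [ha_def]; ring
    have h2b : (2 : ℝ) * l * θ1 = 2 * b := by rw [hb_def]; ring
    rw [h2a, h2b]
    have hstep : ∀ m ∈ Finset.range (τ + 1),
        (a ^ (m + k) * Real.exp (-(2 * a)) * p0 + b ^ (m + k) * Real.exp (-(2 * b)) * p1) /
          ((Nat.factorial m) *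
            (a ^ k * Real.exp (-a) * p0 + b ^ k * Real.exp (-b) * p1))
        = ((a ^ (m + k) * Real.exp (-(2 * a)) * p0 + b ^ (m + k) * Real.exp (-(2 * b)) * p1) /
            (Nat.factorial m)) /
          (a ^ k * Real.exp (-a) * p0 + b ^ k * Real.exp (-b) * p1) := by
      intro m _
      rw [div_div]
    rw [Finset.sum_congr rfl hstep, ← Finset.sum_div]
    congr 1
    have hsum : ∑ m ∈ Finset.range (τ + 1),
        (a ^ (m + k) * Real.exp (-(2 * a)) * p0 + b ^ (m + k) * Real.exp (-(2 * b)) * p1) /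
          (Nat.factorial m : ℝ)
        = (a ^ k * Real.exp (-(2 * a)) * p0) * ∑ m ∈ Finset.range (τ + 1), a ^ m / m.factorial
          + (b ^ k * Real.exp (-(2 * b)) * p1) * ∑ m ∈ Finset.range (τ + 1), b ^ m / m.factorial := by
      rw [Finset.mul_sum, Finset.mul_sum, ← Finset.sum_add_distrib]
      apply Finset.sum_congr rfl
      intro m _
      rw [pow_add, pow_add]
      ring
    rw [hsum, hA_def, hB_def, hea, heb]
    ring
  apply strictAnti_nat_of_succ_lt
  intro k
  beta_reduce
  rw [key k, key (k + 1)]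
  have hu' := hu k
  have hv' := hv k
  have hD : 0 < a ^ k * Real.exp (-a) * p0 + b ^ k * Real.exp (-b) * p1 := by linarith
  have hD' : 0 < a ^ (k + 1) * Real.exp (-a) * p0 + b ^ (k + 1) * Real.exp (-b) * p1 := by
    have := hu (k + 1); have := hv (k + 1); linarith
  rw [div_lt_div_iff₀ hD' hD]
  have hpos : 0 < (a ^ k * Real.exp (-a) * p0) * (b ^ k * Real.exp (-b) * p1) * (A - B) * (b - a) :=
    mul_pos (mul_pos (mul_pos hu' hv') (by linarith)) (by linarith)
  rw [pow_succ, pow_succ]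
  nlinarith [hpos]
end

section
/- For every τ ∈ ℤ₊, the function π(k) = ∑_{m=0}^{τ} 2^{-(m+k+1)} · C(k+m, k) is strictly decreasing in k ∈ ℤ₊. -/
open Finset

lemma belief_diff_key (τ k : ℕ) :
    (∑ m ∈ Finset.range (τ + 1),
        (2 : ℝ) ^ (-((m : ℤ) + k + 1)) * ((k + m).choose k))
      - (∑ m ∈ Finset.range (τ + 1),
        (2 : ℝ) ^ (-((m : ℤ) + (k + 1) + 1)) * (((k + 1) + m).choose (k + 1)))
      = (2 : ℝ) ^ (-((k : ℤ) + τ + 2)) * ((k + τ + 1).choose (k + 1)) := by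
  induction τ with
  | zero =>
    simp only [zero_add, Finset.sum_range_one, Nat.cast_zero, Nat.add_zero,
      Nat.choose_self, Nat.cast_one, mul_one, add_zero]
    rw [show (-((k:ℤ) + 1)) = (-((k:ℤ) + 2)) + 1 by ring,
      show (-((k:ℤ) + 1 + 1)) = (-((k:ℤ) + 2)) by ring,
      zpow_add₀ (two_ne_zero : (2:ℝ) ≠ 0)]
    ring
  | succ τ ih =>
    rw [Finset.sum_range_succ _ (τ + 1), Finset.sum_range_succ _ (τ + 1)]
    have pascalN : (k + (τ + 1) + 1).choose (k + 1)
        = (k + τ + 1).choose k + (k + τ + 1).choose (k + 1) := by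
      rw [show k + (τ + 1) + 1 = (k + τ + 1) + 1 by ring, Nat.choose_succ_succ]
    have final :
        (2 : ℝ) ^ (-((k : ℤ) + τ + 2)) * ((k + τ + 1).choose (k + 1))
        + (2 : ℝ) ^ (-(((τ + 1 : ℕ) : ℤ) + k + 1)) * ((k + (τ + 1)).choose k)
        - (2 : ℝ) ^ (-(((τ + 1 : ℕ) : ℤ) + (k + 1) + 1)) * (((k + 1) + (τ + 1)).choose (k + 1))
        = (2 : ℝ) ^ (-((k : ℤ) + ((τ + 1 : ℕ) : ℤ) + 2)) * ((k + (τ + 1) + 1).choose (k + 1)) := by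
      rw [show ((k + 1) + (τ + 1) : ℕ) = k + (τ + 1) + 1 by ring, pascalN,
        show (k + (τ + 1) : ℕ) = k + τ + 1 by ring]
      push_cast
      rw [show (-((k : ℤ) + τ + 2)) = (-((k:ℤ) + τ + 3)) + 1 by ring,
        show (-(((τ:ℤ) + 1) + k + 1)) = (-((k:ℤ) + τ + 3)) + 1 by ring,
        show (-(((τ:ℤ) + 1) + ((k:ℤ) + 1) + 1)) = (-((k:ℤ) + τ + 3)) by ring,
        show (-((k:ℤ) + ((τ:ℤ) + 1) + 2)) = (-((k:ℤ) + τ + 3)) by ring,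
        zpow_add₀ (two_ne_zero : (2:ℝ) ≠ 0)]
      ring
    push_cast at ih final ⊢
    linarith [ih, final]

theorem belief_strict_anti_uniform (τ : ℕ) :
    StrictAnti (fun k : ℕ =>
      ∑ m ∈ Finset.range (τ + 1),
        (2 : ℝ) ^ (-((m : ℤ) + k + 1)) * ((k + m).choose k)) := by
  apply strictAnti_nat_of_succ_lt
  intro k
  have h := belief_diff_key τ k
  have hpos : (0:ℝ) < (2 : ℝ) ^ (-((k : ℤ) + τ + 2)) * ((k + τ + 1).choose (k + 1)) := by
    apply mul_pos (zpow_pos (by norm_num) _)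
    exact_mod_cast Nat.choose_pos (by omega)
  push_cast at h ⊢
  linarith
end

section
/- For every k ∈ ℤ₊, ∑_{m=0}^{∞} [(k−m+1)/(m+k+1)] · C(m+k+1, k+1) · 2^{-(k+m+2)} = 0. -/
lemma aux_hasSum (k : ℕ) :
    HasSum (fun m : ℕ => ((m + k).choose k : ℝ) * (2 : ℝ) ^ (-((k : ℤ) + m + 1))) 1 := by
  have h : ‖(1/2 : ℝ)‖ < 1 := by norm_num
  have H := (hasSum_choose_mul_geometric_of_norm_lt_one k h).mul_right ((2:ℝ) ^ (-((k:ℤ)+1)))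
  have hval : (1 / (1 - (1/2:ℝ)) ^ (k + 1)) * (2:ℝ) ^ (-((k:ℤ)+1)) = 1 := by
    rw [show (1 - (1/2:ℝ)) = 2⁻¹ by norm_num, one_div, ← inv_pow, inv_inv,
      ← zpow_natCast, ← zpow_add₀ (by norm_num : (2:ℝ) ≠ 0)]
    norm_num
  rw [hval] at H
  convert H using 2 with m
  · rfl
  rw [mul_assoc]
  congr 1
  rw [div_pow, one_pow, one_div, ← zpow_natCast, ← zpow_neg,
    ← zpow_add₀ (by norm_num : (2:ℝ) ≠ 0)]
  congr 1
  ring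

theorem infinite_difference_vanishes (k : ℕ) :
    ∑' m : ℕ, (((k : ℝ) - m + 1) / ((m : ℝ) + k + 1)) * ((m + k + 1).choose (k + 1)) *
        (2 : ℝ) ^ (-((k : ℤ) + m + 2)) = 0 := by
  have H1 := aux_hasSum k
  have H2 := aux_hasSum (k + 1)
  have H := H1.sub H2
  rw [sub_self] at H
  have Heq : ∀ m : ℕ,
      ((m + k).choose k : ℝ) * (2 : ℝ) ^ (-((k : ℤ) + m + 1)) -
        ((m + (k+1)).choose (k+1) : ℝ) * (2 : ℝ) ^ (-((((k+1 : ℕ)) : ℤ) + m + 1)) =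
      (((k : ℝ) - m + 1) / ((m : ℝ) + k + 1)) * ((m + k + 1).choose (k + 1)) *
        (2 : ℝ) ^ (-((k : ℤ) + m + 2)) := by
    intro m
    have hnat : (m + k + 1) * (m + k).choose k = (m + k + 1).choose (k+1) * (k+1) := by
      simpa using Nat.add_one_mul_choose_eq (m + k) k
    have hcast : ((m:ℝ) + k + 1) * ((m + k).choose k : ℝ) =
        ((m + k + 1).choose (k+1) : ℝ) * (k+1) := by
      exact_mod_cast congrArg (Nat.cast : ℕ → ℝ) hnat
    have hne : (m:ℝ) + k + 1 ≠ 0 := by positivity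
    have h2 : (2:ℝ) ^ (-((k : ℤ) + m + 1)) = 2 * (2:ℝ) ^ (-((k : ℤ) + m + 2)) := by
      rw [show -((k : ℤ) + m + 1) = 1 + -((k : ℤ) + m + 2) by ring,
        zpow_add₀ (by norm_num : (2:ℝ) ≠ 0)]
      norm_num
    have h3 : (-((((k+1 : ℕ)) : ℤ) + m + 1)) = -((k : ℤ) + m + 2) := by push_cast; ring
    rw [h2, h3, show m + (k+1) = m + k + 1 by ring]
    have hchoose : ((m + k).choose k : ℝ) =
        ((m + k + 1).choose (k+1) : ℝ) * (k+1) / ((m:ℝ) + k + 1) := by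
      field_simp
      linarith [hcast]
    rw [hchoose]
    field_simp
    ring
  exact (funext Heq ▸ H).tsum_eq
end

section
/- For every k ∈ ℤ₊ and every finite τ ∈ ℤ₊, ∑_{m=0}^{τ} [C(k+m,k) − (1/2)C(k+1+m,k+1)] · 2^{-(k+m+1)} > 0; equivalently, π(k) > π(k+1) where π(k) = ∑_{m=0}^{τ} 2^{-(m+k+1)} C(k+m,k). -/
open Finset

private lemma bsd_term_eq (k m : ℕ) :
    (((k + m).choose k : ℝ) - (1 / 2) * ((k + 1 + m).choose (k + 1))) *
      (2 : ℝ) ^ (-((k : ℤ) + m + 1))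
    = (2 : ℝ) ^ (-((k : ℤ) + (m + 1 : ℕ) + 1)) * ((k + (m + 1)).choose (k + 1))
      - (2 : ℝ) ^ (-((k : ℤ) + m + 1)) * ((k + m).choose (k + 1)) := by
  have h2 : (2 : ℝ) ^ (-((k : ℤ) + (m + 1 : ℕ) + 1))
      = (2 : ℝ) ^ (-((k : ℤ) + m + 1)) / 2 := by
    rw [show (-((k : ℤ) + (m + 1 : ℕ) + 1)) = (-((k : ℤ) + m + 1)) - 1 by push_cast; ring,
      zpow_sub₀ (by norm_num : (2:ℝ) ≠ 0), zpow_one]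
  have hp : k + (m + 1) = (k + m) + 1 := by ring
  have hp2 : k + 1 + m = (k + m) + 1 := by ring
  rw [h2, hp, hp2, Nat.choose_succ_succ]
  push_cast
  ring

theorem belief_strict_decrease (k τ : ℕ) :
    (0 < ∑ m ∈ Finset.range (τ + 1),
        (((k + m).choose k : ℝ) - (1 / 2) * ((k + 1 + m).choose (k + 1))) *
          (2 : ℝ) ^ (-((k : ℤ) + m + 1))) ∧
    (∑ m ∈ Finset.range (τ + 1),
        (2 : ℝ) ^ (-((m : ℤ) + (k + 1) + 1)) * (((k + 1) + m).choose (k + 1)) <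
     ∑ m ∈ Finset.range (τ + 1),
        (2 : ℝ) ^ (-((m : ℤ) + k + 1)) * ((k + m).choose k)) := by
  set f : ℕ → ℝ := fun m => (2 : ℝ) ^ (-((k : ℤ) + m + 1)) * ((k + m).choose (k + 1)) with hf
  have hsum : ∑ m ∈ Finset.range (τ + 1),
      (((k + m).choose k : ℝ) - (1 / 2) * ((k + 1 + m).choose (k + 1))) *
        (2 : ℝ) ^ (-((k : ℤ) + m + 1)) = f (τ + 1) - f 0 := by
    rw [← Finset.sum_range_sub f (τ + 1)]
    exact Finset.sum_congr rfl fun m _ => bsd_term_eq k m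
  have hf0 : f 0 = 0 := by
    simp [hf, Nat.choose_eq_zero_of_lt (by omega : k + 0 < k + 1)]
  have hpos : 0 < f (τ + 1) := by
    apply mul_pos (zpow_pos (by norm_num) _)
    exact_mod_cast Nat.choose_pos (by omega : k + 1 ≤ k + (τ + 1))
  have key : 0 < ∑ m ∈ Finset.range (τ + 1),
      (((k + m).choose k : ℝ) - (1 / 2) * ((k + 1 + m).choose (k + 1))) *
        (2 : ℝ) ^ (-((k : ℤ) + m + 1)) := by
    rw [hsum, hf0, sub_zero]; exact hpos
  refine ⟨key, ?_⟩
  rw [← sub_pos, ← Finset.sum_sub_distrib]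
  have heq : ∀ m ∈ Finset.range (τ + 1),
      (2 : ℝ) ^ (-((m : ℤ) + k + 1)) * ((k + m).choose k)
        - (2 : ℝ) ^ (-((m : ℤ) + (k + 1) + 1)) * (((k + 1) + m).choose (k + 1))
      = (((k + m).choose k : ℝ) - (1 / 2) * ((k + 1 + m).choose (k + 1))) *
          (2 : ℝ) ^ (-((k : ℤ) + m + 1)) := by
    intro m _
    have e1 : (-((m : ℤ) + k + 1)) = -((k : ℤ) + m + 1) := by ring
    have e2 : (2 : ℝ) ^ (-((m : ℤ) + (k + 1) + 1))
        = (2 : ℝ) ^ (-((k : ℤ) + m + 1)) / 2 := by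
      rw [show (-((m : ℤ) + (k + 1) + 1)) = (-((k : ℤ) + m + 1)) - 1 by ring,
        zpow_sub₀ (by norm_num : (2:ℝ) ≠ 0), zpow_one]
    rw [e1, e2]; ring
  rw [Finset.sum_congr rfl heq]
  exact key
end

section
/- Let N ≥ 2 and λ > 2/(N−1). For any thresholds τ_1,…,τ_{N−1} ∈ ℤ₊, define g(k) = ∑_{j=1}^{N−1} ∑_{m=0}^{τ_j} 2^{-(m+k+1)} C(k+m,k) − (k+1)/λ. Then g(0) > 0, g is strictly decreasing, and g(k) < 0 for all sufficiently large k; hence the set {k : g(k) > 0} is a nonempty finite initial segment of ℤ₊ with a well-defined maximum. -/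
open Finset

noncomputable def Saux (k T : ℕ) : ℝ :=
  ∑ m ∈ Finset.range (T + 1), ((k + m).choose k : ℝ) / 2 ^ (m + k + 1)

lemma Saux_peel (k T : ℕ) :
    Saux k (T+1) = Saux k T + ((k+T+1).choose k : ℝ) / 2 ^ (k+T+2) := by
  rw [Saux, Saux, sum_range_succ, show k + (T+1) = k+T+1 from by ring,
    show T+1+k+1 = k+T+2 from by ring]

lemma Saux_key (k T : ℕ) :
    Saux (k+1) T + ((k+T+1).choose (k+1) : ℝ) / 2 ^ (k+T+2) = Saux k T := by
  induction T with
  | zero =>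
      simp [Saux]
      field_simp
      ring
  | succ T ih =>
      rw [Saux_peel, Saux_peel,
        show k+1+T+1 = k+T+2 from by ring, show k+1+T+2 = k+T+3 from by ring,
        show k+(T+1)+1 = k+T+2 from by ring, show k+(T+1)+2 = k+T+3 from by ring]
      have hp : ((k+T+2).choose (k+1) : ℝ)
          = (k+T+1).choose k + (k+T+1).choose (k+1) := by
        exact_mod_cast congrArg Nat.cast (Nat.choose_succ_succ (k+T+1) k)
      have h2 : (2:ℝ) ^ (k+T+2) ≠ 0 := by positivity
      linear_combination ih + hp / 2 ^ (k+T+2)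

lemma Saux_mono (k T : ℕ) : Saux (k+1) T ≤ Saux k T := by
  have h := Saux_key k T
  nlinarith [div_nonneg (Nat.cast_nonneg ((k+T+1).choose (k+1)) : (0:ℝ) ≤ _)
    (le_of_lt (pow_pos (by norm_num : (0:ℝ) < 2) (k+T+2)))]

lemma Saux_half (T : ℕ) : 1/2 ≤ Saux 0 T := by
  rw [Saux]
  have h0 : (0:ℕ) ∈ Finset.range (T+1) := by simp
  have := Finset.single_le_sum
    (f := fun m : ℕ => ((0 + m).choose 0 : ℝ) / 2 ^ (m + 0 + 1))
    (fun i _ => by positivity) h0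
  norm_num at this ⊢
  convert this using 2

lemma term_conv (k m : ℕ) :
    (2:ℝ) ^ (-((m:ℤ) + k + 1)) * ((k+m).choose k : ℝ)
      = ((k+m).choose k : ℝ) / 2 ^ (m+k+1) := by
  rw [show (-((m:ℤ)+k+1)) = -((m+k+1 : ℕ) : ℤ) by push_cast; ring,
    zpow_neg, zpow_natCast]
  ring

theorem finite_best_response_threshold (N : ℕ) (hN : 2 ≤ N) (l : ℝ)
    (hl : 2 / ((N : ℝ) - 1) < l) (τ : Fin (N - 1) → ℕ) :
    let g : ℕ → ℝ := fun k =>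
      (∑ j : Fin (N - 1), ∑ m ∈ Finset.range (τ j + 1),
        (2 : ℝ) ^ (-((m : ℤ) + k + 1)) * ((k + m).choose k)) - ((k : ℝ) + 1) / l
    0 < g 0 ∧ StrictAnti g ∧ (∃ K : ℕ, ∀ k ≥ K, g k < 0) ∧
      {k : ℕ | 0 < g k}.Finite ∧ {k : ℕ | 0 < g k}.Nonempty ∧
      (∀ k, 0 < g k → ∀ j ≤ k, 0 < g j) := by
  intro g
  have hfun : g = fun k => (∑ j : Fin (N-1), Saux k (τ j)) - ((k:ℝ)+1)/l := by
    funext k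
    simp only [g, Saux, term_conv]
  rw [hfun]
  set G : ℕ → ℝ := fun k => (∑ j : Fin (N-1), Saux k (τ j)) - ((k:ℝ)+1)/l with hG
  have hGk : ∀ k, G k = (∑ j : Fin (N-1), Saux k (τ j)) - ((k:ℝ)+1)/l := fun k => rfl
  clear hfun hG
  clear_value G g
  have hN1 : (1:ℝ) ≤ (N:ℝ) - 1 := by
    have : (2:ℝ) ≤ N := by exact_mod_cast hN
    linarith
  have hNpos : (0:ℝ) < (N:ℝ) - 1 := by linarith
  have hlpos : 0 < l := lt_trans (by positivity) hl
  have hcard : ((Fintype.card (Fin (N-1)) : ℝ)) = (N:ℝ) - 1 := by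
    rw [Fintype.card_fin]
    have := Nat.cast_sub (le_trans (by norm_num) hN) (R := ℝ) (m := 1) (n := N)
    simpa using this
  have hinv : 1 / l < ((N:ℝ) - 1) / 2 := by
    rw [div_lt_div_iff₀ hlpos (by norm_num)]
    have := (div_lt_iff₀ hNpos).mp hl
    nlinarith
  have hg0 : 0 < G 0 := by
    rw [hGk]
    have hsum : ((N:ℝ)-1) * (1/2) ≤ ∑ j : Fin (N-1), Saux 0 (τ j) := by
      calc ((N:ℝ)-1) * (1/2) = ∑ _j : Fin (N-1), (1/2 : ℝ) := by
            rw [Finset.sum_const, card_univ, nsmul_eq_mul, hcard]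
        _ ≤ _ := Finset.sum_le_sum (fun j _ => Saux_half (τ j))
    push_cast
    nlinarith
  have hstep : ∀ k, G (k+1) ≤ G k - 1/l := by
    intro k
    rw [hGk, hGk]
    have hs : (∑ j : Fin (N-1), Saux (k+1) (τ j)) ≤ ∑ j : Fin (N-1), Saux k (τ j) :=
      Finset.sum_le_sum (fun j _ => Saux_mono k (τ j))
    have he : ((k:ℝ)+1+1)/l = ((k:ℝ)+1)/l + 1/l := by field_simp
    push_cast
    push_cast at hs he
    linarith
  have h1l : 0 < 1/l := by positivity
  have hanti : StrictAnti G := by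
    apply strictAnti_nat_of_succ_lt
    intro k
    have := hstep k
    linarith
  have hdecay : ∀ k : ℕ, G k ≤ G 0 - k * (1/l) := by
    intro k
    induction k with
    | zero => simp
    | succ k ih =>
        have := hstep k
        push_cast
        push_cast at ih
        linarith
  obtain ⟨K, hK⟩ := exists_nat_gt (G 0 * l)
  have hKneg : ∀ k ≥ K, G k < 0 := by
    intro k hk
    have h1 : G k ≤ G K := hanti.antitone hk
    have h2 : G K ≤ G 0 - K * (1/l) := hdecay K
    have h3 : G 0 < (K:ℝ) / l := (lt_div_iff₀ hlpos).mpr hK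
    rw [div_eq_mul_one_div] at h3
    linarith
  refine ⟨hg0, hanti, ⟨K, hKneg⟩, ?_, ⟨0, hg0⟩, ?_⟩
  · apply Set.Finite.subset (Set.finite_Iio K)
    intro k hk
    simp only [Set.mem_Iio]
    by_contra h
    push_neg at h
    exact absurd hk (not_lt.mpr (le_of_lt (hKneg k h)))
  · intro k hk j hj
    calc (0:ℝ) < G k := hk
      _ ≤ G j := hanti.antitone hj
end
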